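/- arXiv:1209.5441 — 5 statements merged into one kernel-verified Lean document; each statement's English description precedes it below -/
import Mathlib

section
/- For all natural numbers a and b with a + 2 ≤ b, the open interval (a..b) has a unique 2-fattest number: there exists exactly one integer f with a < f < b such that every integer g with a < g < b and g ≠ f has strictly smaller 2-adic valuation than f. -/
private lemma between_fatter {k g f : ℕ} (hg : 0 < g) (hgf : g < f)
    (hvg : padicValNat 2 g = k) (hvf : padicValNat 2 f = k) :
    ∃ h : ℕ, g < h ∧ h < f ∧ k < padicValNat 2 h := by
  have h2 : Fact (Nat.Prime 2) := ⟨Nat.prime_two⟩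
  have hf : 0 < f := lt_trans hg hgf
  have hdg : (2:ℕ) ^ k ∣ g := by
    rw [padicValNat_dvd_iff_le hg.ne', hvg]
  have hdf : (2:ℕ) ^ k ∣ f := by
    rw [padicValNat_dvd_iff_le hf.ne', hvf]
  obtain ⟨u, hu⟩ := hdg
  obtain ⟨v, hv⟩ := hdf
  -- u is odd
  have hodd : ¬ 2 ∣ u := by
    intro ⟨w, hw⟩
    have : (2:ℕ) ^ (k+1) ∣ g := ⟨w, by rw [hu, hw, pow_succ]; ring⟩
    rw [padicValNat_dvd_iff_le hg.ne', hvg] at this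
    omega
  refine ⟨2 ^ k * (u + 1), ?_, ?_, ?_⟩
  · rw [hu]
    exact Nat.mul_lt_mul_left ((Nat.pow_pos (by norm_num) : 0 < 2 ^ k)) |>.mpr (by omega)
  · have huv : u < v := by
      by_contra hle
      have : f ≤ g := by
        rw [hu, hv]; exact Nat.mul_le_mul_left _ (by omega)
      omega
    have hoddv : ¬ 2 ∣ v := by
      intro ⟨w, hw⟩
      have : (2:ℕ) ^ (k+1) ∣ f := ⟨w, by rw [hv, hw, pow_succ]; ring⟩
      rw [padicValNat_dvd_iff_le hf.ne', hvf] at this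
      omega
    rw [hv]
    exact Nat.mul_lt_mul_left ((Nat.pow_pos (by norm_num) : 0 < 2 ^ k)) |>.mpr (by omega)
  · have hne : 2 ^ k * (u + 1) ≠ 0 := by positivity
    have hdvd : (2:ℕ) ^ (k+1) ∣ 2 ^ k * (u + 1) := by
      obtain ⟨w, hw⟩ : 2 ∣ u + 1 := by omega
      exact ⟨w, by rw [hw, pow_succ]; ring⟩
    rw [padicValNat_dvd_iff_le hne] at hdvd
    omega

/-- For all natural numbers `a` and `b` with `a + 2 ≤ b`, the open interval `(a..b)`
has a unique 2-fattest number: there is exactly one `f` with `a < f < b` such that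
every `g` with `a < g < b` and `g ≠ f` has strictly smaller 2-adic valuation. -/
theorem two_fattest_exists_unique (a b : ℕ) (hab : a + 2 ≤ b) :
    ∃! f : ℕ, (a < f ∧ f < b) ∧
      ∀ g : ℕ, a < g → g < b → g ≠ f → padicValNat 2 g < padicValNat 2 f := by
  have hne : (Finset.Ioo a b).Nonempty := ⟨a + 1, by simp; omega⟩
  obtain ⟨f, hfmem, hmax⟩ := Finset.exists_max_image (Finset.Ioo a b) (padicValNat 2) hne
  rw [Finset.mem_Ioo] at hfmem
  have key : ∀ g : ℕ, a < g → g < b → g ≠ f →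
      padicValNat 2 g < padicValNat 2 f := by
    intro g hag hgb hgf
    have hle : padicValNat 2 g ≤ padicValNat 2 f :=
      hmax g (Finset.mem_Ioo.mpr ⟨hag, hgb⟩)
    rcases lt_or_eq_of_le hle with h | heq
    · exact h
    · exfalso
      have hg0 : 0 < g := by omega
      have hf0 : 0 < f := by omega
      rcases lt_or_gt_of_ne hgf with hlt | hgt
      · obtain ⟨h, h1, h2, h3⟩ := between_fatter hg0 hlt heq rfl
        have := hmax h (Finset.mem_Ioo.mpr ⟨by omega, by omega⟩)
        omega
      · obtain ⟨h, h1, h2, h3⟩ := between_fatter hf0 hgt heq.symm rfl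
        have := hmax h (Finset.mem_Ioo.mpr ⟨by omega, by omega⟩)
        omega
  refine ⟨f, ⟨⟨hfmem.1, hfmem.2⟩, key⟩, ?_⟩
  rintro f' ⟨⟨haf', hf'b⟩, hkey'⟩
  by_contra hne'
  have h1 := key f' haf' hf'b hne'
  have h2 := hkey' f hfmem.1 hfmem.2 (Ne.symm hne')
  omega
end

section
/- Let i ≥ 1 and let a < b be natural numbers such that the open interval (a..b) contains at most one multiple of 2^i, and let f be the 2-fattest number of (a..b). Then each of the two open intervals (a..f) and (f..b) contains at most one multiple of 2^{i−1}. -/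
private lemma mid_mult (j g₁ g₂ : ℕ) (h : g₁ < g₂) (d1 : 2 ^ j ∣ g₁) (d2 : 2 ^ j ∣ g₂) :
    ∃ m, g₁ ≤ m ∧ m ≤ g₂ ∧ 2 ^ (j + 1) ∣ m := by
  obtain ⟨k, rfl⟩ := d1
  obtain ⟨l, rfl⟩ := d2
  have hkl : k < l := by
    have := pow_pos (by norm_num : (0:ℕ) < 2) j
    exact lt_of_mul_lt_mul_left h (le_of_lt this)
  rcases Nat.even_or_odd k with hk | hk
  · obtain ⟨c, hc⟩ := hk
    exact ⟨2 ^ j * k, le_refl _, le_of_lt h, ⟨c, by rw [hc]; ring⟩⟩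
  · obtain ⟨c, hc⟩ := hk
    refine ⟨2 ^ j * (k + 1), Nat.mul_le_mul_left _ (by omega),
      Nat.mul_le_mul_left _ (by omega), ⟨c + 1, by rw [hc]; ring⟩⟩

private lemma key (i a b f : ℕ) (hi : 1 ≤ i) (haf : a < f) (hfb : f < b)
    (hone : ∀ g₁ g₂ : ℕ, a < g₁ → g₁ < b → a < g₂ → g₂ < b →
      2 ^ i ∣ g₁ → 2 ^ i ∣ g₂ → g₁ = g₂)
    (hfat : ∀ g : ℕ, a < g → g < b → g ≠ f → padicValNat 2 g < padicValNat 2 f)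
    (g₁ g₂ : ℕ) (h1a : a < g₁) (h2b : g₂ < b) (hlt : g₁ < g₂)
    (hm1 : ∀ m, g₁ ≤ m → m ≤ g₂ → a < m ∧ m < b ∧ m ≠ f)
    (d1 : 2 ^ (i - 1) ∣ g₁) (d2 : 2 ^ (i - 1) ∣ g₂) : False := by
  obtain ⟨m, hgm, hmg, hdvd⟩ := mid_mult (i - 1) g₁ g₂ hlt d1 d2
  rw [Nat.sub_add_cancel hi] at hdvd
  obtain ⟨ham, hmb, hmf⟩ := hm1 m hgm hmg
  have hm0 : m ≠ 0 := by omega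
  have hvm : i ≤ padicValNat 2 m :=
    (padicValNat_dvd_iff_le hm0).mp hdvd
  have hvf : padicValNat 2 m < padicValNat 2 f := hfat m ham hmb hmf
  have hf0 : f ≠ 0 := by
    intro h; subst h; simp at hvf
  have hdf : 2 ^ i ∣ f := (padicValNat_dvd_iff_le hf0).mpr (by omega)
  exact hmf (hone m f ham hmb haf hfb hdvd hdf)

/-- If the open interval `(a..b)` contains at most one multiple of `2^i` (`i ≥ 1`) and
`f` is its 2-fattest number, then each of `(a..f)` and `(f..b)` contains at most one
multiple of `2^(i-1)`. -/
theorem split_at_two_fattest (i a b f : ℕ) (hi : 1 ≤ i) (hab : a < b)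
    (hone : ∀ g₁ g₂ : ℕ, a < g₁ → g₁ < b → a < g₂ → g₂ < b →
      2 ^ i ∣ g₁ → 2 ^ i ∣ g₂ → g₁ = g₂)
    (haf : a < f) (hfb : f < b)
    (hfat : ∀ g : ℕ, a < g → g < b → g ≠ f → padicValNat 2 g < padicValNat 2 f) :
    (∀ g₁ g₂ : ℕ, a < g₁ → g₁ < f → a < g₂ → g₂ < f →
      2 ^ (i - 1) ∣ g₁ → 2 ^ (i - 1) ∣ g₂ → g₁ = g₂) ∧
    (∀ g₁ g₂ : ℕ, f < g₁ → g₁ < b → f < g₂ → g₂ < b →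
      2 ^ (i - 1) ∣ g₁ → 2 ^ (i - 1) ∣ g₂ → g₁ = g₂) := by
  constructor
  · intro g₁ g₂ h1 h2 h3 h4 d1 d2
    rcases lt_trichotomy g₁ g₂ with h | h | h
    · exact (key i a b f hi haf hfb hone hfat g₁ g₂ h1 (by omega) h (fun m hm1 hm2 => ⟨by omega, by omega, by omega⟩) d1 d2).elim
    · exact h
    · exact (key i a b f hi haf hfb hone hfat g₂ g₁ h3 (by omega) h (fun m hm1 hm2 => ⟨by omega, by omega, by omega⟩) d2 d1).elim
  · intro g₁ g₂ h1 h2 h3 h4 d1 d2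
    rcases lt_trichotomy g₁ g₂ with h | h | h
    · exact (key i a b f hi haf hfb hone hfat g₁ g₂ (by omega) h4 h (fun m hm1 hm2 => ⟨by omega, by omega, by omega⟩) d1 d2).elim
    · exact h
    · exact (key i a b f hi haf hfb hone hfat g₂ g₁ (by omega) h2 h (fun m hm1 hm2 => ⟨by omega, by omega, by omega⟩) d2 d1).elim
end

section
/- Let ℓ < r be natural numbers and let k = ⌊log₂(ℓ XOR r)⌋ be the position of the most significant bit at which ℓ and r differ (note ℓ XOR r ≠ 0 since ℓ ≠ r). Set f = 2^k · ⌊r / 2^k⌋ (equivalently, f is r with its k lowest bits cleared, i.e., f = (−1 ≪ k) AND r). Then ℓ < f ≤ r, and f is the 2-fattest number of the half-open interval (ℓ..r]: every integer g with ℓ < g ≤ r and g ≠ f has strictly smaller 2-adic valuation than f. -/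
/-- Let `ℓ < r`, `k = ⌊log₂ (ℓ XOR r)⌋` and `f = 2^k * ⌊r / 2^k⌋` (i.e. `r` with its `k`
lowest bits cleared). Then `ℓ < f ≤ r` and `f` is the 2-fattest number of `(ℓ..r]`. -/
theorem two_fattest_formula (ℓ r : ℕ) (hlr : ℓ < r) :
    ℓ < 2 ^ (Nat.log 2 (ℓ ^^^ r)) * (r / 2 ^ (Nat.log 2 (ℓ ^^^ r))) ∧
    2 ^ (Nat.log 2 (ℓ ^^^ r)) * (r / 2 ^ (Nat.log 2 (ℓ ^^^ r))) ≤ r ∧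
    ∀ g : ℕ, ℓ < g → g ≤ r →
      g ≠ 2 ^ (Nat.log 2 (ℓ ^^^ r)) * (r / 2 ^ (Nat.log 2 (ℓ ^^^ r))) →
      padicValNat 2 g <
        padicValNat 2 (2 ^ (Nat.log 2 (ℓ ^^^ r)) * (r / 2 ^ (Nat.log 2 (ℓ ^^^ r)))) := by
  set k := Nat.log 2 (ℓ ^^^ r) with hk
  have hxne : ℓ ^^^ r ≠ 0 := by
    intro h
    exact absurd (xor_eq_zero_iff.mp h) (Nat.ne_of_lt hlr)
  have hxlow : 2 ^ k ≤ ℓ ^^^ r := Nat.pow_log_le_self 2 hxne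
  have hxhigh : ℓ ^^^ r < 2 ^ (k + 1) := Nat.lt_pow_succ_log_self (by norm_num) _
  -- high parts agree
  have hhigh : ℓ / 2 ^ (k + 1) = r / 2 ^ (k + 1) := by
    have : ℓ >>> (k + 1) = r >>> (k + 1) := by
      apply Nat.eq_of_testBit_eq
      intro i
      simp only [Nat.testBit_shiftRight]
      have hx : (ℓ ^^^ r).testBit (k + 1 + i) = false := by
        apply Nat.testBit_eq_false_of_lt
        calc ℓ ^^^ r < 2 ^ (k + 1) := hxhigh
          _ ≤ 2 ^ (k + 1 + i) := Nat.pow_le_pow_right (by norm_num) (by omega)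
      rw [Nat.testBit_xor] at hx
      cases h1 : ℓ.testBit (k + 1 + i) <;> cases h2 : r.testBit (k + 1 + i) <;>
        simp_all
    simpa [Nat.shiftRight_eq_div_pow] using this
  -- bit k differs
  have hbit : (ℓ ^^^ r) / 2 ^ k % 2 = 1 := by
    have h1 : (ℓ ^^^ r) / 2 ^ k = 1 := by
      have hpk : 0 < 2 ^ k := Nat.pow_pos (by norm_num)
      have h2 : (ℓ ^^^ r) / 2 ^ k < 2 := by
        rw [Nat.div_lt_iff_lt_mul hpk]
        calc ℓ ^^^ r < 2 ^ (k + 1) := hxhigh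
          _ = 2 ^ k * 2 := by rw [pow_succ]
          _ = 2 * 2 ^ k := Nat.mul_comm _ _
      have h3 := Nat.div_le_div_right (c := 2 ^ k) hxlow
      rw [Nat.div_self hpk] at h3
      omega
    omega
  have hbit' : ℓ / 2 ^ k % 2 ≠ r / 2 ^ k % 2 := by
    have tℓ := Nat.testBit_eq_decide_div_mod_eq (x := ℓ) (i := k)
    have tr := Nat.testBit_eq_decide_div_mod_eq (x := r) (i := k)
    have tx := Nat.testBit_eq_decide_div_mod_eq (x := ℓ ^^^ r) (i := k)
    have hxb : (ℓ ^^^ r).testBit k = true := by rw [tx]; simp [hbit]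
    rw [Nat.testBit_xor, tℓ, tr] at hxb
    intro h
    rw [h] at hxb
    simp at hxb
  -- decompose div by 2^k
  have dℓ : ℓ / 2 ^ k = 2 * (ℓ / 2 ^ (k + 1)) + ℓ / 2 ^ k % 2 := by
    rw [pow_succ, ← Nat.div_div_eq_div_mul]
    omega
  have dr : r / 2 ^ k = 2 * (r / 2 ^ (k + 1)) + r / 2 ^ k % 2 := by
    rw [pow_succ, ← Nat.div_div_eq_div_mul]
    omega
  have hmono : ℓ / 2 ^ k ≤ r / 2 ^ k := Nat.div_le_div_right hlr.le
  have key : r / 2 ^ k = ℓ / 2 ^ k + 1 ∧ r / 2 ^ k % 2 = 1 := by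
    have hℓm := Nat.mod_lt (ℓ / 2 ^ k) (y := 2) (by norm_num)
    have hrm := Nat.mod_lt (r / 2 ^ k) (y := 2) (by norm_num)
    omega
  obtain ⟨hsucc, hodd⟩ := key
  have hpk : 0 < 2 ^ k := Nat.pow_pos (by norm_num)
  have hlt : ℓ < 2 ^ k * (r / 2 ^ k) := by
    rw [hsucc, Nat.mul_add, Nat.mul_one]
    have h1 := Nat.mod_add_div ℓ (2 ^ k)
    have h2 := Nat.mod_lt ℓ hpk
    omega
  have hle : 2 ^ k * (r / 2 ^ k) ≤ r := Nat.mul_div_le r (2 ^ k)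
  refine ⟨hlt, hle, fun g hg1 hg2 hgne => ?_⟩
  have hfne' : 0 < r / 2 ^ k := by omega
  have hfne : 2 ^ k * (r / 2 ^ k) ≠ 0 := Nat.ne_of_gt (Nat.mul_pos hpk hfne')
  have hgne0 : g ≠ 0 := by omega
  have hfval : k ≤ padicValNat 2 (2 ^ k * (r / 2 ^ k)) := by
    rw [← padicValNat_dvd_iff_le (by intro h; rw [h] at hlt; omega)]
    exact Dvd.intro _ rfl
  have hgval : padicValNat 2 g < k := by
    by_contra h
    push_neg at h
    have hdvd : 2 ^ k ∣ g := (padicValNat_dvd_iff_le hgne0).mpr h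
    obtain ⟨m, hm⟩ := hdvd
    apply hgne
    have h1 : m ≤ r / 2 ^ k := by
      rw [Nat.le_div_iff_mul_le hpk, Nat.mul_comm]
      rw [hm] at hg2
      omega
    have h2 : ℓ / 2 ^ k < m := by
      by_contra h2
      push_neg at h2
      have : 2 ^ k * m ≤ 2 ^ k * (ℓ / 2 ^ k) := Nat.mul_le_mul_left _ h2
      have := Nat.mul_div_le ℓ (2 ^ k)
      omega
    have : m = r / 2 ^ k := by omega
    rw [hm, this]
  omega
end

section
/- Let i be a natural number and ℓ < r natural numbers such that the half-open interval (ℓ..r] contains at most one multiple of 2^i, and suppose ⌊ℓ/2^i⌋ ≠ ⌊r/2^i⌋ (equivalently, the bit test (−1 ≪ i) AND ℓ ≠ (−1 ≪ i) AND r succeeds). Then f = 2^i · ⌊r/2^i⌋ satisfies ℓ < f ≤ r, f is the unique multiple of 2^i in (ℓ..r], and f is the 2-fattest number of (ℓ..r]: every integer g with ℓ < g ≤ r and g ≠ f has strictly smaller 2-adic valuation than f. -/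
/-- If `(ℓ..r]` contains at most one multiple of `2^i` and `⌊ℓ/2^i⌋ ≠ ⌊r/2^i⌋`, then
`f = 2^i * ⌊r/2^i⌋` satisfies `ℓ < f ≤ r`, is the unique multiple of `2^i` in `(ℓ..r]`,
and is the 2-fattest number of `(ℓ..r]`. -/
theorem two_fattest_of_bit_test (i ℓ r : ℕ) (hlr : ℓ < r)
    (hone : ∀ g₁ g₂ : ℕ, ℓ < g₁ → g₁ ≤ r → ℓ < g₂ → g₂ ≤ r →
      2 ^ i ∣ g₁ → 2 ^ i ∣ g₂ → g₁ = g₂)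
    (hne : ℓ / 2 ^ i ≠ r / 2 ^ i) :
    ℓ < 2 ^ i * (r / 2 ^ i) ∧ 2 ^ i * (r / 2 ^ i) ≤ r ∧
    2 ^ i ∣ 2 ^ i * (r / 2 ^ i) ∧
    (∀ g : ℕ, ℓ < g → g ≤ r → 2 ^ i ∣ g → g = 2 ^ i * (r / 2 ^ i)) ∧
    ∀ g : ℕ, ℓ < g → g ≤ r → g ≠ 2 ^ i * (r / 2 ^ i) →
      padicValNat 2 g < padicValNat 2 (2 ^ i * (r / 2 ^ i)) := by
  have hp : (0:ℕ) < 2 ^ i := Nat.pow_pos (by norm_num)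
  have hdivlt : ℓ / 2 ^ i < r / 2 ^ i :=
    lt_of_le_of_ne (Nat.div_le_div_right hlr.le) hne
  have hfle : 2 ^ i * (r / 2 ^ i) ≤ r := Nat.mul_div_le r (2 ^ i)
  have hlf : ℓ < 2 ^ i * (r / 2 ^ i) := by
    have h3 : 2 ^ i * (ℓ / 2 ^ i + 1) ≤ 2 ^ i * (r / 2 ^ i) :=
      Nat.mul_le_mul_left _ hdivlt
    have h4 := Nat.div_add_mod ℓ (2 ^ i)
    have h5 := Nat.mod_lt ℓ hp
    rw [Nat.mul_add, Nat.mul_one] at h3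
    linarith
  have hdvd : 2 ^ i ∣ 2 ^ i * (r / 2 ^ i) := Dvd.intro _ rfl
  have huniq : ∀ g : ℕ, ℓ < g → g ≤ r → 2 ^ i ∣ g → g = 2 ^ i * (r / 2 ^ i) :=
    fun g h1 h2 h3 => hone g _ h1 h2 hlf hfle h3 hdvd
  refine ⟨hlf, hfle, hdvd, huniq, fun g h1 h2 h3 => ?_⟩
  have hg0 : g ≠ 0 := by omega
  have hf0 : 2 ^ i * (r / 2 ^ i) ≠ 0 := by omega
  have hvg : padicValNat 2 g < i := by
    by_contra h
    push_neg at h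
    exact h3 (huniq g h1 h2 ((pow_dvd_pow 2 h).trans pow_padicValNat_dvd))
  have hvf : i ≤ padicValNat 2 (2 ^ i * (r / 2 ^ i)) :=
    (padicValNat_dvd_iff_le hf0).mp hdvd
  omega
end

section
/- Let w and j be natural numbers with j ≤ w, let S be a finite set of natural numbers all less than 2^w, and let x < 2^w be such that S contains both an element < x and an element ≥ x (so x⁻ and x⁺ exist). Set m = 2^{w−j} and D(x,S) = max{x⁺−x, x−x⁻}. If m ≤ D(x,S), then either every y ∈ S with ⌊y/m⌋ = ⌊x/m⌋ satisfies y < x, or every y ∈ S with ⌊y/m⌋ = ⌊x/m⌋ satisfies y ≥ x. -/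
/-- If `2^(w-j) ≤ D(x,S)`, then `x` is either larger than all elements of `S` sharing
the length-`j` prefix of `x`, or smaller than or equal to all of them. -/
theorem short_in_prefs (w j : ℕ) (hj : j ≤ w) (S : Finset ℕ)
    (hSw : ∀ y ∈ S, y < 2 ^ w) (x : ℕ) (hx : x < 2 ^ w)
    (hlt : (S.filter (fun y => y < x)).Nonempty)
    (hge : (S.filter (fun y => x ≤ y)).Nonempty)
    (hD : 2 ^ (w - j) ≤
      max ((S.filter (fun y => x ≤ y)).min' hge - x)
          (x - (S.filter (fun y => y < x)).max' hlt)) :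
    (∀ y ∈ S, y / 2 ^ (w - j) = x / 2 ^ (w - j) → y < x) ∨
    (∀ y ∈ S, y / 2 ^ (w - j) = x / 2 ^ (w - j) → x ≤ y) := by
  set m := 2 ^ (w - j) with hm
  have hm0 : 0 < m := Nat.pow_pos (by norm_num)
  -- same quotient implies distance < m
  have key : ∀ y : ℕ, y / m = x / m → y < x + m ∧ x < y + m := by
    intro y h
    have h1 := Nat.div_add_mod y m
    have h2 := Nat.div_add_mod x m
    have h3 := Nat.mod_lt y hm0
    have h4 := Nat.mod_lt x hm0
    rw [h] at h1
    clear_value m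
    generalize m * (x / m) = q at h1 h2
    omega
  rcases le_max_iff.mp hD with h | h
  · -- m ≤ x⁺ - x : all same-prefix elements are < x
    left
    intro y hy hq
    by_contra hxy
    push_neg at hxy
    have hmem : y ∈ S.filter (fun y => x ≤ y) := Finset.mem_filter.mpr ⟨hy, hxy⟩
    have hmin := Finset.min'_le _ y hmem
    have := (key y hq).1
    omega
  · -- m ≤ x - x⁻ : all same-prefix elements are ≥ x
    right
    intro y hy hq
    by_contra hxy
    push_neg at hxy
    have hmem : y ∈ S.filter (fun y => y < x) := Finset.mem_filter.mpr ⟨hy, hxy⟩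
    have hmax := Finset.le_max' _ y hmem
    have := (key y hq).2
    omega
end
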